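/- Let S be a topological semigroup and let π: S×X→X be a non-expansive action of S on a metric space (X,d). Then the following are equivalent: (1) X can be extended by adding a fixed point of S, i.e., there exists a metric space (Y,d') equipped with a non-expansive action of S that has a fixed point, together with an isometric and equivariant embedding of X into Y; (2) every orbit S·x of S in X is a bounded set. -/

import Mathlib

open Bornology Metric Set

universe u v

/-- A non-expansive (jointly continuous) action of a topological semigroup `S`
on a metric space `X`. -/
structure NonexpAction (S : Type*) (X : Type*) [Semigroup S] [TopologicalSpace S]
    [MetricSpace X] where
  act : S → X → X
  mul_act : ∀ s t x, act (s * t) x = act s (act t x)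
  nonexp : ∀ s x y, dist (act s x) (act s y) ≤ dist x y
  cont : Continuous fun p : S × X => act p.1 p.2

section Aux

variable {S : Type u} {X : Type v} [Semigroup S] [TopologicalSpace S] [ContinuousMul S]
    [MetricSpace X] (π : NonexpAction S X)

/-- The set of distances from the (extended) orbit of `x` to the base point `x₀`. -/
noncomputable def orbSet (x₀ x : X) : Set ℝ :=
  (fun y => dist y x₀) '' insert x (range fun s => π.act s x)

lemma orbSet_nonempty (x₀ x : X) : (orbSet π x₀ x).Nonempty :=
  ⟨dist x x₀, x, mem_insert _ _, rfl⟩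

lemma orbSet_bddAbove (hb : ∀ x : X, IsBounded (range fun s => π.act s x)) (x₀ x : X) :
    BddAbove (orbSet π x₀ x) := by
  obtain ⟨r, hr⟩ := (isBounded_iff_subset_closedBall x₀).mp ((hb x).insert x)
  exact ⟨r, by rintro a ⟨y, hy, rfl⟩; exact hr hy⟩

lemma le_sSup_orbSet (hb : ∀ x : X, IsBounded (range fun s => π.act s x)) (x₀ : X) {x y : X}
    (hy : y ∈ insert x (range fun s => π.act s x)) :
    dist y x₀ ≤ sSup (orbSet π x₀ x) :=
  le_csSup (orbSet_bddAbove π hb x₀ x) ⟨y, hy, rfl⟩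

/-- The distance from a point of `X` to the new fixed point. -/
noncomputable def Dfun (x₀ x : X) : ℝ := 1 + sSup (orbSet π x₀ x)

lemma dist_base_le (hb : ∀ x : X, IsBounded (range fun s => π.act s x)) (x₀ x : X) :
    dist x x₀ ≤ sSup (orbSet π x₀ x) :=
  le_sSup_orbSet π hb x₀ (mem_insert _ _)

lemma one_le_Dfun (hb : ∀ x : X, IsBounded (range fun s => π.act s x)) (x₀ x : X) :
    1 ≤ Dfun π x₀ x := by
  have h := dist_base_le π hb x₀ x
  have h2 := dist_nonneg (x := x) (y := x₀)
  unfold Dfun; linarith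

lemma sSup_orbSet_lip (hb : ∀ x : X, IsBounded (range fun s => π.act s x)) (x₀ x y : X) :
    sSup (orbSet π x₀ x) ≤ sSup (orbSet π x₀ y) + dist x y := by
  apply csSup_le (orbSet_nonempty π x₀ x)
  rintro a ⟨w, hw, rfl⟩
  rcases hw with rfl | ⟨s, rfl⟩
  · have h1 := le_sSup_orbSet π hb x₀ (mem_insert y (range fun s => π.act s y))
    have h2 := dist_triangle w y x₀
    show dist w x₀ ≤ _
    linarith
  · have h1 : dist (π.act s y) x₀ ≤ sSup (orbSet π x₀ y) :=
      le_sSup_orbSet π hb x₀ (mem_insert_of_mem _ ⟨s, rfl⟩)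
    have h2 := dist_triangle (π.act s x) (π.act s y) x₀
    have h3 := π.nonexp s x y
    linarith

lemma Dfun_lip (hb : ∀ x : X, IsBounded (range fun s => π.act s x)) (x₀ x y : X) :
    Dfun π x₀ x ≤ Dfun π x₀ y + dist x y := by
  have := sSup_orbSet_lip π hb x₀ x y
  unfold Dfun; linarith

lemma Dfun_act (hb : ∀ x : X, IsBounded (range fun s => π.act s x)) (x₀ : X) (t : S) (x : X) :
    Dfun π x₀ (π.act t x) ≤ Dfun π x₀ x := by
  have : sSup (orbSet π x₀ (π.act t x)) ≤ sSup (orbSet π x₀ x) := by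
    apply csSup_le (orbSet_nonempty π x₀ _)
    rintro a ⟨w, hw, rfl⟩
    rcases hw with rfl | ⟨s, rfl⟩
    · exact le_sSup_orbSet π hb x₀ (mem_insert_of_mem _ ⟨t, rfl⟩)
    · show dist (π.act s (π.act t x)) x₀ ≤ _
      rw [← π.mul_act]
      exact le_sSup_orbSet π hb x₀ (mem_insert_of_mem _ ⟨s * t, rfl⟩)
  unfold Dfun; linarith

/-- Distance on `Option X`, where `none` is the new fixed point. -/
noncomputable def odist (x₀ : X) : Option X → Option X → ℝ
  | some x, some y => dist x y
  | some x, none => Dfun π x₀ x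
  | none, some y => Dfun π x₀ y
  | none, none => 0

/-- The extended metric space. -/
noncomputable def extMetric (hb : ∀ x : X, IsBounded (range fun s => π.act s x)) (x₀ : X) :
    MetricSpace (Option X) where
  dist := odist π x₀
  dist_self := by rintro (_ | x) <;> simp [odist]
  dist_comm := by rintro (_ | x) (_ | y) <;> simp [odist, dist_comm]
  dist_triangle := by
    have h1 := one_le_Dfun π hb x₀
    rintro (_ | x) (_ | y) (_ | z) <;> simp only [odist]
    · linarith
    · linarith [h1 z]
    · linarith [h1 y]
    · linarith [Dfun_lip π hb x₀ z y, dist_comm y z]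
    · linarith [h1 x]
    · have hx := dist_base_le π hb x₀ x
      have hz := dist_base_le π hb x₀ z
      have := dist_triangle x x₀ z
      rw [dist_comm z x₀] at hz
      unfold Dfun; linarith
    · linarith [Dfun_lip π hb x₀ x y]
    · exact dist_triangle x y z
  eq_of_dist_eq_zero := by
    have h1 := one_le_Dfun π hb x₀
    rintro (_ | x) (_ | y) h <;> simp only [odist] at h
    · rfl
    · exact absurd h (by linarith [h1 y])
    · exact absurd h (by linarith [h1 x])
    · exact congrArg _ (eq_of_dist_eq_zero h)

end Aux

/-- A non-expansive action of a topological semigroup on a metric space can be extended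
by adding a fixed point iff all orbits are bounded. -/
theorem stmt_0 {S : Type u} {X : Type v} [Semigroup S] [TopologicalSpace S] [ContinuousMul S]
    [MetricSpace X] (π : NonexpAction S X) :
    (∃ (Y : Type (max u v)) (_ : MetricSpace Y) (σ : NonexpAction S Y) (f : X → Y) (z : Y),
        (∀ s, σ.act s z = z) ∧ Isometry f ∧ ∀ s x, f (π.act s x) = σ.act s (f x)) ↔
      ∀ x : X, IsBounded (range fun s => π.act s x) := by
  constructor
  · rintro ⟨Y, _, σ, f, z, hz, hf, heq⟩ x
    rw [isBounded_range_iff]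
    refine ⟨2 * dist (f x) z, fun s t => ?_⟩
    have key : ∀ u : S, dist (σ.act u (f x)) z ≤ dist (f x) z := fun u => by
      calc dist (σ.act u (f x)) z = dist (σ.act u (f x)) (σ.act u z) := by rw [hz u]
        _ ≤ dist (f x) z := σ.nonexp u _ _
    calc dist (π.act s x) (π.act t x) = dist (f (π.act s x)) (f (π.act t x)) :=
          (hf.dist_eq _ _).symm
      _ = dist (σ.act s (f x)) (σ.act t (f x)) := by rw [heq, heq]
      _ ≤ dist (σ.act s (f x)) z + dist z (σ.act t (f x)) := dist_triangle _ _ _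
      _ ≤ 2 * dist (f x) z := by
          have := key s
          have := key t
          rw [dist_comm z (σ.act t (f x))]
          linarith
  · intro hb
    rcases isEmpty_or_nonempty X with hX | hX
    · exact ⟨PUnit.{max u v + 1}, inferInstance,
        ⟨fun _ _ => PUnit.unit, fun _ _ _ => rfl,
          fun _ x y => by simpa using dist_nonneg (x := x) (y := y), continuous_const⟩,
        fun x => PUnit.unit, PUnit.unit, fun s => rfl, fun x => hX.elim x, fun s x => hX.elim x⟩
    obtain ⟨x₀⟩ := hX
    letI : MetricSpace (Option X) := extMetric π hb x₀
    have hdist_some : ∀ x y : X, dist (some x) (some y) = dist x y := fun _ _ => rfl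
    have hdist_some_none : ∀ x : X, dist (some x) (none : Option X) = Dfun π x₀ x :=
      fun _ => rfl
    -- `{none}` is open
    have hopen_none : IsOpen ({none} : Set (Option X)) := by
      rw [Metric.isOpen_iff]
      rintro y rfl
      refine ⟨1, one_pos, fun z hz => ?_⟩
      rw [mem_ball] at hz
      match z with
      | none => exact rfl
      | some w =>
        exact absurd hz (not_lt.mpr (le_trans (one_le_Dfun π hb x₀ w) (le_of_eq rfl)))
    -- `range some` is open
    have hopen_some : IsOpen (range (some : X → Option X)) := by
      rw [Metric.isOpen_iff]
      rintro _ ⟨x, rfl⟩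
      refine ⟨1, one_pos, fun z hz => ?_⟩
      rw [mem_ball] at hz
      match z with
      | some w => exact ⟨w, rfl⟩
      | none =>
        exfalso
        rw [dist_comm] at hz
        exact absurd hz (not_lt.mpr (one_le_Dfun π hb x₀ x))
    have hisom : Isometry (some : X → Option X) := Isometry.of_dist_eq fun _ _ => rfl
    -- continuity of the extended action on `Option X`
    have hG : Continuous (fun p : S × Option X => Option.map (π.act p.1) p.2) := by
      rw [continuous_iff_continuousAt]
      rintro ⟨s, (_ | x)⟩
      · refine (continuousAt_const (y := (none : Option X))).congr ?_
        filter_upwards [prod_mem_nhds Filter.univ_mem (hopen_none.mem_nhds rfl)] with p hp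
        have hp2 : p.2 = none := hp.2
        simp [hp2]
      · have hemb : Topology.IsOpenEmbedding (Prod.map (id : S → S) (some : X → Option X)) :=
          Topology.IsOpenEmbedding.id.prodMap ⟨hisom.isEmbedding, hopen_some⟩
        have hc : Continuous ((fun p : S × Option X => Option.map (π.act p.1) p.2) ∘
            Prod.map (id : S → S) (some : X → Option X)) := by
          have heq2 : ((fun p : S × Option X => Option.map (π.act p.1) p.2) ∘
              Prod.map (id : S → S) (some : X → Option X)) =
              fun p : S × X => some (π.act p.1 p.2) := rfl
          rw [heq2]
          exact hisom.continuous.comp π.cont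
        exact (hemb.continuousAt_iff (x := (s, x))).mp hc.continuousAt
    refine ⟨ULift.{u} (Option X), inferInstance,
      ⟨fun s y => ULift.up (Option.map (π.act s) y.down), ?_, ?_, ?_⟩,
      fun x => ULift.up (some x), ULift.up none, fun s => rfl,
      Isometry.of_dist_eq fun _ _ => rfl, fun s x => rfl⟩
    · rintro s t ⟨(_ | x)⟩
      · rfl
      · exact congrArg (fun w => ULift.up (some w)) (π.mul_act s t x)
    · rintro s ⟨(_ | x)⟩ ⟨(_ | y)⟩
      · exact le_refl 0
      · exact Dfun_act π hb x₀ s y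
      · exact Dfun_act π hb x₀ s x
      · exact π.nonexp s x y
    · exact continuous_uliftUp.comp
        (hG.comp (continuous_id.prodMap continuous_uliftDown))
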